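/- Let X be a normal projective variety over ℂ with finitely generated and free divisor class group Cl(X), and let {f_i : i ∈ I} be a set of homogeneous generators of the Cox ring R(X). Then the effective cone Eff(X) ⊆ Cl(X)_ℚ equals the cone generated by the degrees deg(f_i), i ∈ I. In particular, the effective cone of a Mori dream space is polyhedral. -/

import Mathlib

noncomputable section

/-- The convex cone in `ℚ^n` generated by a set of vectors. -/
def coneGen {n : ℕ} (S : Set (Fin n → ℚ)) : Set (Fin n → ℚ) :=
  { x | ∃ (m : ℕ) (c : Fin m → ℚ) (v : Fin m → (Fin n → ℚ)),
      (∀ i, 0 ≤ c i ∧ v i ∈ S) ∧ x = ∑ i, c i • v i }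

/-- The canonical embedding `ℤ^n → ℚ^n`. -/
def toQ {n : ℕ} (v : Fin n → ℤ) : Fin n → ℚ := fun i => (v i : ℚ)

/-- `H` is the Hilbert basis of the monoid of lattice points of the cone `C ⊆ ℚ^n`:
it consists of lattice points of `C`, every lattice point of `C` is a nonnegative
integral combination of elements of `H`, and `H` is minimal with this property. -/
def IsHilbertBasis {n : ℕ} (C : Set (Fin n → ℚ)) (H : Set (Fin n → ℤ)) : Prop :=
  (∀ v ∈ H, toQ v ∈ C) ∧
  (∀ v : Fin n → ℤ, toQ v ∈ C →
    ∃ (m : ℕ) (c : Fin m → ℕ) (w : Fin m → (Fin n → ℤ)),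
      (∀ i, w i ∈ H) ∧ v = ∑ i, c i • w i) ∧
  (∀ H' : Set (Fin n → ℤ), H' ⊆ H →
    (∀ v : Fin n → ℤ, toQ v ∈ C →
      ∃ (m : ℕ) (c : Fin m → ℕ) (w : Fin m → (Fin n → ℤ)),
        (∀ i, w i ∈ H') ∧ v = ∑ i, c i • w i) → H' = H)

/-- An abstract model of a normal projective variety `X` over `ℂ` whose divisor class
group is finitely generated and free (of rank `n`, identified with `ℤⁿ = Fin n → ℤ`),
together with its Cox ring `R(X) = ⊕_{[D] ∈ Cl(X)} H⁰(X, O_X(D))` and its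
`Cl(X)`-grading, in which the graded piece of degree `[D]` is `H⁰(X, O_X(D))`. -/
structure NPVariety (n : ℕ) where
  /-- the group of Weil divisors of `X` -/
  Div : Type
  [instDiv : AddCommGroup Div]
  /-- the class map onto the divisor class group `Cl(X) ≅ ℤⁿ` -/
  cls : Div →+ (Fin n → ℤ)
  cls_surjective : Function.Surjective cls
  /-- effective divisors -/
  IsEffective : Div → Prop
  /-- the Cox ring `R(X)` -/
  R : Type
  [instRing : CommRing R]
  [instAlg : Algebra ℂ R]
  /-- the `Cl(X)`-grading on `R(X)`: the piece of degree `[D]` is `H⁰(X, O_X(D))` -/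
  gr : (Fin n → ℤ) → Submodule ℂ R
  [instGraded : GradedAlgebra gr]
  /-- a graded piece is nonzero exactly when its degree is the class of
  an effective divisor -/
  gr_ne_bot_iff : ∀ d, gr d ≠ ⊥ ↔ ∃ D, IsEffective D ∧ cls D = d

attribute [instance] NPVariety.instDiv NPVariety.instRing NPVariety.instAlg
  NPVariety.instGraded

namespace NPVariety

variable {n : ℕ} (X : NPVariety n)

/-- an element of the Cox ring is homogeneous if it lies in some graded piece -/
def IsHomogeneousElem (f : X.R) : Prop := ∃ d, f ∈ X.gr d

/-- a set of homogeneous generators of the Cox ring -/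
def IsGenSet (S : Set X.R) : Prop :=
  (∀ f ∈ S, X.IsHomogeneousElem f) ∧ Algebra.adjoin ℂ S = ⊤

/-- a minimal set of homogeneous generators: no element is a polynomial in the others -/
def IsMinGenSet (S : Set X.R) : Prop :=
  X.IsGenSet S ∧ ∀ f ∈ S, f ∉ Algebra.adjoin ℂ (S \ {f})

/-- `R(X)` has a generator in degree `w` if every minimal set of homogeneous generators
contains a nontrivial element of degree `w` -/
def HasGeneratorInDegree (w : Fin n → ℤ) : Prop :=
  ∀ S : Set X.R, X.IsMinGenSet S → ∃ f ∈ S, f ≠ 0 ∧ f ∈ X.gr w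

/-- the effective cone `Eff(X) ⊆ Cl(X)_ℚ`: the cone generated by classes of
effective divisors -/
def effConeQ : Set (Fin n → ℚ) :=
  coneGen (toQ '' { d | ∃ D, X.IsEffective D ∧ X.cls D = d })

end NPVariety


lemma toQ_add {n : ℕ} (a b : Fin n → ℤ) : toQ (a + b) = toQ a + toQ b := by
  funext i; simp [toQ]

lemma toQ_zero {n : ℕ} : toQ (0 : Fin n → ℤ) = 0 := by funext i; simp [toQ]

lemma zero_mem_coneGen {n : ℕ} (S : Set (Fin n → ℚ)) : 0 ∈ coneGen S :=
  ⟨0, Fin.elim0, Fin.elim0, fun i => i.elim0, by simp⟩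

lemma mem_coneGen {n : ℕ} {S : Set (Fin n → ℚ)} {x} (h : x ∈ S) : x ∈ coneGen S :=
  ⟨1, fun _ => 1, fun _ => x, fun _ => ⟨zero_le_one, h⟩, by simp⟩

lemma add_mem_coneGen {n : ℕ} {S : Set (Fin n → ℚ)} {x y}
    (hx : x ∈ coneGen S) (hy : y ∈ coneGen S) : x + y ∈ coneGen S := by
  obtain ⟨m1, c1, v1, h1, e1⟩ := hx
  obtain ⟨m2, c2, v2, h2, e2⟩ := hy
  refine ⟨m1 + m2, Fin.addCases c1 c2, Fin.addCases v1 v2, fun i => ?_, ?_⟩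
  · refine Fin.addCases (fun j => ?_) (fun j => ?_) i <;> simp [h1, h2]
  · rw [e1, e2, Fin.sum_univ_add]; simp

lemma smul_mem_coneGen {n : ℕ} {S : Set (Fin n → ℚ)} {x} {a : ℚ}
    (ha : 0 ≤ a) (hx : x ∈ coneGen S) : a • x ∈ coneGen S := by
  obtain ⟨m, c, v, h, e⟩ := hx
  refine ⟨m, fun i => a * c i, v, fun i => ⟨mul_nonneg ha (h i).1, (h i).2⟩, ?_⟩
  rw [e, Finset.smul_sum]; simp [mul_smul]

lemma coneGen_subset {n : ℕ} {S T : Set (Fin n → ℚ)} (h : S ⊆ coneGen T) :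
    coneGen S ⊆ coneGen T := by
  rintro x ⟨m, c, v, hc, rfl⟩
  exact Finset.sum_induction _ (· ∈ coneGen T) (fun _ _ => add_mem_coneGen)
    (zero_mem_coneGen T) (fun i _ => smul_mem_coneGen (hc i).1 (h (hc i).2))

lemma coneGen_mono {n : ℕ} {S T : Set (Fin n → ℚ)} (h : S ⊆ T) :
    coneGen S ⊆ coneGen T :=
  coneGen_subset (fun _ hx => mem_coneGen (h hx))


namespace NPVariety

variable {n : ℕ} (X : NPVariety n)

lemma key {I : Type} (f : I → X.R)
    (hhom : ∀ i, X.IsHomogeneousElem (f i))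
    (hgen : Algebra.adjoin ℂ (Set.range f) = ⊤) :
    X.effConeQ = coneGen (toQ '' { d | ∃ i, f i ≠ 0 ∧ f i ∈ X.gr d }) := by
  classical
  set T : Set (Fin n → ℤ) := { d | ∃ i, f i ≠ 0 ∧ f i ∈ X.gr d } with hT
  set M := AddSubmonoid.closure T with hM
  set A : Submodule ℂ X.R := ⨆ d : M, X.gr d with hA
  have hgrle : ∀ d ∈ M, X.gr d ≤ A := fun d hd =>
    le_iSup (fun d : M => X.gr d.1) ⟨d, hd⟩
  have hone : (1 : X.R) ∈ A := hgrle 0 (zero_mem M) (SetLike.one_mem_graded X.gr)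
  have hmul : ∀ x y : X.R, x ∈ A → y ∈ A → x * y ∈ A := by
    intro x y hx hy
    refine Submodule.iSup_induction (motive := fun x => x * y ∈ A) _ hx ?_ ?_ ?_
    · rintro ⟨d, hd⟩ a ha
      refine Submodule.iSup_induction (motive := fun y => a * y ∈ A) _ hy ?_ ?_ ?_
      · rintro ⟨e, he⟩ b hb
        exact hgrle (d + e) (add_mem hd he) (SetLike.mul_mem_graded ha hb)
      · show a * 0 ∈ A; rw [mul_zero]; exact zero_mem A
      · intro u v hu hv
        show a * (u + v) ∈ A
        rw [mul_add]; exact add_mem hu hv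
    · show 0 * y ∈ A; rw [zero_mul]; exact zero_mem A
    · intro u v hu hv
      show (u + v) * y ∈ A
      rw [add_mul]; exact add_mem hu hv
  have htop : ∀ x : X.R, x ∈ A := by
    have hle : Algebra.adjoin ℂ (Set.range f) ≤ A.toSubalgebra hone hmul := by
      apply Algebra.adjoin_le
      rintro _ ⟨i, rfl⟩
      by_cases h0 : f i = 0
      · rw [h0]; exact zero_mem A
      · obtain ⟨d, hd⟩ := hhom i
        exact hgrle d (AddSubmonoid.subset_closure ⟨i, h0, hd⟩) hd
    intro x
    exact hle (hgen ▸ Algebra.mem_top)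
  have hsupp : ∀ x : X.R, x ∈ A → ∀ e, e ∉ M →
      (DirectSum.decompose X.gr x e : X.R) = 0 := by
    intro x hx
    refine Submodule.iSup_induction
      (motive := fun x => ∀ e, e ∉ M → (DirectSum.decompose X.gr x e : X.R) = 0) _ hx ?_ ?_ ?_
    · rintro ⟨d, hd⟩ a ha e he
      exact DirectSum.decompose_of_mem_ne X.gr ha (fun h => he (h ▸ hd))
    · intro e _; simp
    · intro u v hu hv e he
      rw [DirectSum.decompose_add, DirectSum.add_apply, Submodule.coe_add,
        hu e he, hv e he, add_zero]
  have hMmem : ∀ d : Fin n → ℤ, X.gr d ≠ ⊥ → d ∈ M := by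
    intro d hd
    obtain ⟨x, hx, hne⟩ := (Submodule.ne_bot_iff _).1 hd
    by_contra hdM
    exact hne (by rw [← DirectSum.decompose_of_mem_same X.gr hx]
                  exact hsupp x (htop x) d hdM)
  have hMcone : ∀ d ∈ M, toQ d ∈ coneGen (toQ '' T) := by
    intro d hd
    refine AddSubmonoid.closure_induction (motive := fun d _ => toQ d ∈ coneGen (toQ '' T))
      ?_ ?_ ?_ hd
    · intro x hx
      show toQ x ∈ coneGen (toQ '' T)
      exact mem_coneGen ⟨x, hx, rfl⟩
    · show toQ 0 ∈ coneGen (toQ '' T); rw [toQ_zero]; exact zero_mem_coneGen _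
    · intro a b _ _ ha hb
      show toQ (a + b) ∈ coneGen (toQ '' T)
      rw [toQ_add]; exact add_mem_coneGen ha hb
  apply Set.Subset.antisymm
  · apply coneGen_subset
    rintro _ ⟨d, ⟨D, hD, hDd⟩, rfl⟩
    exact hMcone d (hMmem d ((X.gr_ne_bot_iff d).2 ⟨D, hD, hDd⟩))
  · apply coneGen_mono
    rintro _ ⟨d, ⟨i, h0, hmem⟩, rfl⟩
    exact ⟨d, (X.gr_ne_bot_iff d).1 ((Submodule.ne_bot_iff _).2 ⟨f i, hmem, h0⟩), rfl⟩


end NPVariety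

/-- Proposition 2.1 of Artebani–Hausen–Laface.
Let `X` be a normal projective variety over `ℂ` with finitely generated free divisor
class group, and let `f i`, `i ∈ I`, be a set of homogeneous generators of the Cox ring
`R(X)`. Then `Eff(X) = cone(deg (f i) : i ∈ I)` in `Cl(X)_ℚ`. In particular, if `X` is
a Mori dream space (i.e. `R(X)` is finitely generated), the effective cone of `X`
is polyhedral. -/
theorem effectiveCone_eq_cone_of_degrees_of_generators
    {n : ℕ} (X : NPVariety n) {I : Type} (f : I → X.R)
    (hhom : ∀ i, X.IsHomogeneousElem (f i))
    (hgen : Algebra.adjoin ℂ (Set.range f) = ⊤) :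
    X.effConeQ = coneGen (toQ '' { d | ∃ i, f i ≠ 0 ∧ f i ∈ X.gr d }) ∧
    (Algebra.FiniteType ℂ X.R →
      ∃ G : Finset (Fin n → ℤ),
        X.effConeQ = coneGen (toQ '' (G : Set (Fin n → ℤ)))) := by
  classical
  refine ⟨X.key f hhom hgen, fun hft => ?_⟩
  obtain ⟨s, hs⟩ := hft.out
  set g : (↑(s : Set X.R) × (Fin n → ℤ)) → X.R :=
    fun p => (DirectSum.decompose X.gr (p.1 : X.R) p.2 : X.R) with hg
  have hhom2 : ∀ p, X.IsHomogeneousElem (g p) :=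
    fun p => ⟨p.2, (DirectSum.decompose X.gr (p.1 : X.R) p.2).2⟩
  have hgen2 : Algebra.adjoin ℂ (Set.range g) = ⊤ := by
    rw [eq_top_iff, ← hs]
    apply Algebra.adjoin_le
    intro x hx
    rw [← DirectSum.sum_support_decompose X.gr x]
    exact sum_mem fun e _ => Algebra.subset_adjoin ⟨(⟨x, hx⟩, e), rfl⟩
  have hfin : ({ d | ∃ p, g p ≠ 0 ∧ g p ∈ X.gr d }).Finite := by
    apply Set.Finite.subset (Set.Finite.biUnion s.finite_toSet
      (fun x _ => (DirectSum.decompose X.gr x).support.finite_toSet))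
    rintro d ⟨⟨⟨x, hx⟩, e⟩, hne, hmem⟩
    have hge : g (⟨x, hx⟩, e) ∈ X.gr e := (DirectSum.decompose X.gr x e).2
    have hde : d = e := by
      by_contra h
      apply hne
      rw [← DirectSum.decompose_of_mem_same X.gr hge]
      exact DirectSum.decompose_of_mem_ne X.gr hmem h
    subst hde
    refine Set.mem_biUnion hx ?_
    simp only [Finset.mem_coe, DFinsupp.mem_support_iff]
    intro h0
    exact hne (by show ((DirectSum.decompose X.gr x) d : X.R) = 0; rw [h0]; rfl)
  refine ⟨hfin.toFinset, ?_⟩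
  rw [X.key g hhom2 hgen2, Set.Finite.coe_toFinset]
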